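/- For every integer n ≥ 5, with α₀ := √3/(2π), one has (1 − 1/(α₀·(n−1)))^{−n−1/2} ≤ (1 − 1/(4·α₀))^{−11/2}, and the latter quantity is less than 4.69 × 10⁵. -/

import Mathlib

open Real

private lemma log_ge_aux (x : ℝ) (hx : 0 < x) : 1 - 1/x ≤ Real.log x := by
  have h := Real.log_le_sub_one_of_pos (show (0:ℝ) < 1/x by positivity)
  rw [one_div, Real.log_inv] at h
  rw [inv_eq_one_div] at h
  linarith

set_option maxHeartbeats 2000000 in
theorem stmt11 (n : ℕ) (hn : 5 ≤ n) :
    (1 - 1 / ((Real.sqrt 3 / (2 * π)) * ((n : ℝ) - 1))) ^ (-(n : ℝ) - 1 / 2)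
      ≤ (1 - 1 / (4 * (Real.sqrt 3 / (2 * π)))) ^ (-(11 : ℝ) / 2) ∧
    (1 - 1 / (4 * (Real.sqrt 3 / (2 * π)))) ^ (-(11 : ℝ) / 2) < 4.69 * 10 ^ 5 := by
  have hpi1 : (3.141592 : ℝ) < π := Real.pi_gt_d6
  have hpi2 : π < 3.141593 := Real.pi_lt_d6
  have hs3sq : Real.sqrt 3 ^ 2 = 3 := Real.sq_sqrt (by norm_num)
  have hs3nn : (0:ℝ) ≤ Real.sqrt 3 := Real.sqrt_nonneg 3
  have hs3a : (1.7320508 : ℝ) < Real.sqrt 3 := by nlinarith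
  have hs3b : Real.sqrt 3 < 1.7320509 := by nlinarith
  set a : ℝ := Real.sqrt 3 / (2 * π) with ha_def
  have hpi0 : (0:ℝ) < 2 * π := by linarith
  have ha1 : (0.2756639 : ℝ) < a := by
    rw [ha_def, lt_div_iff₀ hpi0]; nlinarith
  have ha2 : a < 0.27567 := by
    rw [ha_def, div_lt_iff₀ hpi0]; nlinarith
  have ha0 : (0:ℝ) < a := by linarith
  set B5 : ℝ := 1 - 1 / (4 * a) with hB5_def
  -- bounds on B5
  have h4a0 : (0:ℝ) < 4 * a := by linarith
  have hB5gt : (0.093094 : ℝ) < B5 := by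
    have h : 1 / (4 * a) < 0.906906 := by
      rw [div_lt_iff₀ h4a0]; nlinarith
    rw [hB5_def]; linarith
  have hB5lt : B5 < 0.093119 := by
    have h : (0.906881 : ℝ) < 1 / (4 * a) := by
      rw [lt_div_iff₀ h4a0]; nlinarith
    rw [hB5_def]; linarith
  have hB5pos : (0:ℝ) < B5 := lt_trans (by norm_num) hB5gt
  -- lower bound for -log B5
  have hL5 : (1264/579 : ℝ) ≤ -Real.log B5 := by
    have hK : B5 ≤ ((500:ℝ)/579)^16 := by
      have : (0.093119:ℝ) ≤ ((500:ℝ)/579)^16 := by norm_num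
      linarith
    have h1 : Real.log B5 ≤ Real.log (((500:ℝ)/579)^16) :=
      Real.log_le_log hB5pos hK
    rw [Real.log_pow] at h1
    have h2 : Real.log ((500:ℝ)/579) ≤ (500:ℝ)/579 - 1 :=
      Real.log_le_sub_one_of_pos (by norm_num)
    push_cast at h1
    linarith
  constructor
  · -- main inequality
    rcases Nat.lt_or_ge n 7 with h7 | h7
    · interval_cases n
      · -- n = 5
        have he : (1 : ℝ) - 1 / (a * (((5:ℕ) : ℝ) - 1)) = B5 := by
          rw [hB5_def]; norm_num [mul_comm]
        rw [he]
        have he2 : (-((5:ℕ) : ℝ) - 1 / 2) = (-(11:ℝ)/2) := by norm_num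
        rw [he2]
      · -- n = 6
        set b6 : ℝ := 1 - 1 / (a * (((6:ℕ) : ℝ) - 1)) with hb6_def
        have hb6gt : (0.274478 : ℝ) < b6 := by
          have h5a : (0:ℝ) < a * (((6:ℕ):ℝ) - 1) := by push_cast; nlinarith
          have h : 1 / (a * (((6:ℕ):ℝ) - 1)) < 0.725522 := by
            rw [div_lt_iff₀ h5a]; push_cast; nlinarith
          rw [hb6_def]; linarith
        have hb6pos : (0:ℝ) < b6 := lt_trans (by norm_num) hb6gt
        have hlb6 : -(44/25 : ℝ) ≤ Real.log b6 := by
          have hK : ((25:ℝ)/36)^4 ≤ b6 := by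
            have : ((25:ℝ)/36)^4 ≤ 0.274478 := by norm_num
            linarith
          have h1 : Real.log (((25:ℝ)/36)^4) ≤ Real.log b6 :=
            Real.log_le_log (by positivity) hK
          rw [Real.log_pow] at h1
          have h2 := log_ge_aux ((25:ℝ)/36) (by norm_num)
          push_cast at h1
          norm_num at h2
          linarith
        rw [Real.rpow_def_of_pos hb6pos, Real.rpow_def_of_pos hB5pos,
          Real.exp_le_exp]
        have hcast : (-((6:ℕ) : ℝ) - 1 / 2) = -(13/2 : ℝ) := by norm_num
        rw [hcast]
        linarith [hL5, hlb6]
    · -- n ≥ 7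
      have hm : (7 : ℝ) ≤ (n : ℝ) := by exact_mod_cast h7
      set m : ℝ := (n : ℝ) with hm_def
      have hden : (0:ℝ) < a * (m - 1) - 1 := by
        have h6 : (0.2756639:ℝ) * 6 ≤ a * (m - 1) :=
          mul_le_mul ha1.le (by linarith) (by norm_num) ha0.le
        linarith
      set bn : ℝ := 1 - 1 / (a * (m - 1)) with hbn_def
      have hprod : (0:ℝ) < a * (m - 1) := by linarith
      have hbn_pos : (0:ℝ) < bn := by
        have h : 1 / (a * (m - 1)) < 1 := by rw [div_lt_one hprod]; linarith
        rw [hbn_def]; linarith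
      have hbn_le1 : bn ≤ 1 := by
        have : (0:ℝ) ≤ 1 / (a * (m - 1)) := by positivity
        rw [hbn_def]; linarith
      have h1 : 1 / bn - 1 = 1 / (a * (m - 1) - 1) := by
        rw [hbn_def]
        have hx : (1:ℝ) - 1 / (a * (m - 1)) = (a * (m - 1) - 1) / (a * (m - 1)) := by
          rw [sub_div, div_self hprod.ne']
        rw [hx, one_div_div, div_sub_one hden.ne']
        ring
      have h2 : -Real.log bn ≤ 1 / (a * (m - 1) - 1) := by
        have := log_ge_aux bn hbn_pos
        linarith [h1, this]
      have hlog_nonneg : 0 ≤ -Real.log bn := by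
        have := Real.log_nonpos hbn_pos.le hbn_le1
        linarith
      have h3 : (m + 1/2) * (1 / (a * (m - 1) - 1)) ≤ 6952/579 := by
        rw [mul_one_div, div_le_iff₀ hden]
        nlinarith [mul_pos (sub_pos.mpr ha1) (show (0:ℝ) < m - 1 by linarith)]
      have h4 : (m + 1/2) * (-Real.log bn) ≤ 6952/579 := by
        calc (m + 1/2) * (-Real.log bn) ≤ (m + 1/2) * (1 / (a * (m - 1) - 1)) := by
              apply mul_le_mul_of_nonneg_left h2 (by linarith)
          _ ≤ 6952/579 := h3
      rw [Real.rpow_def_of_pos hbn_pos, Real.rpow_def_of_pos hB5pos,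
        Real.exp_le_exp]
      have hring : Real.log bn * (-m - 1/2) = (m + 1/2) * (-Real.log bn) := by ring
      have hring2 : Real.log B5 * (-(11:ℝ)/2) = (11/2) * (-Real.log B5) := by ring
      rw [hring, hring2]
      linarith [hL5, h4]
  · -- numerical bound
    set X : ℝ := B5 ^ (-(11:ℝ)/2) with hX_def
    have hXpos : (0:ℝ) < X := Real.rpow_pos_of_pos hB5pos _
    have hinv : B5⁻¹ < 10.7419 := by
      calc B5⁻¹ < ((0.093094:ℝ))⁻¹ :=
            inv_strictAnti₀ (by norm_num) hB5gt
        _ < 10.7419 := by norm_num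
    have hpow : (B5⁻¹)^(11:ℕ) < 219961000000 := by
      calc (B5⁻¹)^(11:ℕ) < (10.7419:ℝ)^(11:ℕ) := by
            apply pow_lt_pow_left₀ hinv (inv_nonneg.mpr hB5pos.le) (by norm_num)
        _ < 219961000000 := by norm_num
    have hX2 : X * X = (B5⁻¹)^(11:ℕ) := by
      rw [hX_def, ← Real.rpow_add hB5pos, inv_pow, ← Real.rpow_natCast B5 11,
        ← Real.rpow_neg hB5pos.le]
      norm_num
    have : X < 469000 := by
      by_contra hc
      push_neg at hc
      have h1 : (469000:ℝ) * 469000 ≤ X * X :=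
        mul_le_mul hc hc (by norm_num) (by linarith)
      rw [hX2] at h1
      linarith
    calc X < 469000 := this
      _ ≤ 4.69 * 10 ^ 5 := by norm_num
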